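/- Let E and 𝒯 be measurable spaces with sigma-finite measures, fix t_y ∈ 𝒯 and S ≥ 1, and let π be a probability density on E, f(·|θ) a probability density on 𝒯 for each θ, and K_h : 𝒯 → [0,∞) measurable, with (θ, t) ↦ K_h(t_y − t) f(t|θ) π(θ) integrable on E × 𝒯 with strictly positive integral. Define the joint kernel K̃_h(t_y, t^{1:S}) = S^{-1} Σ_{s=1}^S K_h(t_y − t^s). Then the normalizing constants of the joint and marginal ABC posteriors coincide: ∫_E ∫_{𝒯^S} K̃_h(t_y, t^{1:S}) [∏_{s=1}^S f(t^s|θ)] π(θ) dt^{1:S} dθ = ∫_E ∫_𝒯 K_h(t_y − t) f(t|θ) π(θ) dt dθ; consequently the normalized joint posterior π_J(θ, t^{1:S}|t_y) integrates over 𝒯^S exactly to the normalized marginal posterior π_M(θ|t_y). -/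

import Mathlib

open MeasureTheory ENNReal

lemma lintegral_pi_prod {𝒯 : Type*} [MeasurableSpace 𝒯] (ν : Measure 𝒯) [SigmaFinite ν] :
    ∀ (n : ℕ) (g : Fin n → 𝒯 → ℝ≥0∞), (∀ i, Measurable (g i)) →
    ∫⁻ x : Fin n → 𝒯, ∏ i, g i (x i) ∂(Measure.pi fun _ => ν) = ∏ i, ∫⁻ t, g i t ∂ν := by
  intro n
  induction n with
  | zero =>
    intro g hg
    simp [Measure.pi_of_empty (fun _ : Fin 0 => ν)]
  | succ n ih =>
    intro g hg
    have hmp := measurePreserving_piFinSuccAbove (fun _ : Fin (n+1) => (ν : Measure 𝒯)) 0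
    have hF : Measurable fun p : 𝒯 × (Fin n → 𝒯) =>
        g 0 p.1 * ∏ i : Fin n, g i.succ (p.2 i) :=
      ((hg 0).comp measurable_fst).mul <|
        Finset.measurable_prod _ fun i _ =>
          (hg i.succ).comp ((measurable_pi_apply i).comp measurable_snd)
    calc ∫⁻ x : Fin (n+1) → 𝒯, ∏ i, g i (x i) ∂(Measure.pi fun _ => ν)
        = ∫⁻ x : Fin (n+1) → 𝒯,
            (fun p : 𝒯 × (Fin n → 𝒯) => g 0 p.1 * ∏ i : Fin n, g i.succ (p.2 i))
              (MeasurableEquiv.piFinSuccAbove (fun _ => 𝒯) 0 x) ∂(Measure.pi fun _ => ν) := by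
          refine lintegral_congr fun x => ?_
          simp [MeasurableEquiv.piFinSuccAbove, Fin.prod_univ_succ, Fin.succAbove, Fin.tail]
      _ = ∫⁻ p : 𝒯 × (Fin n → 𝒯), g 0 p.1 * ∏ i : Fin n, g i.succ (p.2 i)
            ∂(ν.prod (Measure.pi fun _ : Fin n => ν)) := hmp.lintegral_comp hF
      _ = (∫⁻ t, g 0 t ∂ν) * ∫⁻ x : Fin n → 𝒯, ∏ i : Fin n, g i.succ (x i)
            ∂(Measure.pi fun _ : Fin n => ν) :=
          lintegral_prod_mul (hg 0).aemeasurable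
            ((Finset.measurable_prod _ fun (i : Fin n) _ =>
              (hg i.succ).comp (measurable_pi_apply i)).aemeasurable)
      _ = ∏ i, ∫⁻ t, g i t ∂ν := by
          rw [ih (fun i => g i.succ) (fun i => hg i.succ), Fin.prod_univ_succ]

lemma abc_core {E 𝒯 : Type*} [MeasurableSpace E] [MeasurableSpace 𝒯]
    [AddGroup 𝒯] [MeasurableSub₂ 𝒯]
    (ν : Measure 𝒯) [SigmaFinite ν]
    (π : E → ℝ≥0∞) (f : E → 𝒯 → ℝ≥0∞) (K : 𝒯 → ℝ≥0∞)
    (hf : Measurable (Function.uncurry f))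
    (hfprob : ∀ θ, ∫⁻ t, f θ t ∂ν = 1)
    (hK : Measurable K)
    (t_y : 𝒯) (S : ℕ) (hS : 1 ≤ S) (θ : E) :
    ∫⁻ ts : Fin S → 𝒯,
        ((S : ℝ≥0∞)⁻¹ * ∑ s : Fin S, K (t_y - ts s)) * (∏ s : Fin S, f θ (ts s))
        ∂(Measure.pi fun _ : Fin S => ν)
      = ∫⁻ t, K (t_y - t) * f θ t ∂ν := by
  have mK : Measurable fun t : 𝒯 => K (t_y - t) :=
    hK.comp (measurable_const.sub measurable_id)
  have mf : Measurable (f θ) := hf.comp measurable_prodMk_left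
  have key : ∀ s : Fin S,
      ∫⁻ ts : Fin S → 𝒯, K (t_y - ts s) * ∏ j : Fin S, f θ (ts j)
        ∂(Measure.pi fun _ : Fin S => ν) = ∫⁻ t, K (t_y - t) * f θ t ∂ν := by
    intro s
    set g : Fin S → 𝒯 → ℝ≥0∞ :=
      Function.update (fun _ => f θ) s (fun t => K (t_y - t) * f θ t) with hg
    have hgm : ∀ i, Measurable (g i) := by
      intro i
      by_cases h : i = s
      · subst h; simp [g, Function.update_self]; exact mK.mul mf
      · simp [g, Function.update_of_ne h]; exact mf
    have h1 : ∀ ts : Fin S → 𝒯,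
        K (t_y - ts s) * ∏ j : Fin S, f θ (ts j) = ∏ j : Fin S, g j (ts j) := by
      intro ts
      have : (fun j => g j (ts j)) =
          Function.update (fun j => f θ (ts j)) s (K (t_y - ts s) * f θ (ts s)) := by
        funext j
        by_cases h : j = s
        · subst h; simp [g]
        · simp [g, Function.update_of_ne h]
      rw [this, Finset.prod_update_of_mem (Finset.mem_univ s),
        ← Finset.mul_prod_erase Finset.univ (fun j => f θ (ts j)) (Finset.mem_univ s),
        mul_assoc, Finset.sdiff_singleton_eq_erase]
    have h2 : (fun i => ∫⁻ t, g i t ∂ν) =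
        Function.update (fun _ : Fin S => (1 : ℝ≥0∞)) s (∫⁻ t, K (t_y - t) * f θ t ∂ν) := by
      funext i
      by_cases h : i = s
      · subst h; simp [g]
      · simp [g, Function.update_of_ne h, hfprob θ]
    calc ∫⁻ ts : Fin S → 𝒯, K (t_y - ts s) * ∏ j : Fin S, f θ (ts j)
          ∂(Measure.pi fun _ : Fin S => ν)
        = ∫⁻ ts : Fin S → 𝒯, ∏ j : Fin S, g j (ts j) ∂(Measure.pi fun _ : Fin S => ν) := by
          exact lintegral_congr h1
      _ = ∏ i : Fin S, ∫⁻ t, g i t ∂ν := lintegral_pi_prod ν S g hgm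
      _ = ∫⁻ t, K (t_y - t) * f θ t ∂ν := by
          rw [h2, Finset.prod_update_of_mem (Finset.mem_univ s)]
          simp
  have mterm : ∀ s : Fin S, Measurable fun ts : Fin S → 𝒯 =>
      K (t_y - ts s) * ∏ j : Fin S, f θ (ts j) :=
    fun s => (mK.comp (measurable_pi_apply s)).mul
      (Finset.measurable_prod _ fun (j : Fin S) _ => mf.comp (measurable_pi_apply j))
  calc ∫⁻ ts : Fin S → 𝒯,
        ((S : ℝ≥0∞)⁻¹ * ∑ s : Fin S, K (t_y - ts s)) * (∏ s : Fin S, f θ (ts s))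
        ∂(Measure.pi fun _ : Fin S => ν)
      = ∫⁻ ts : Fin S → 𝒯,
          (S : ℝ≥0∞)⁻¹ * ∑ s : Fin S, (K (t_y - ts s) * ∏ j : Fin S, f θ (ts j))
          ∂(Measure.pi fun _ : Fin S => ν) := by
        refine lintegral_congr fun ts => ?_
        rw [mul_assoc, Finset.sum_mul]
    _ = (S : ℝ≥0∞)⁻¹ * ∑ s : Fin S, ∫⁻ ts : Fin S → 𝒯,
          (K (t_y - ts s) * ∏ j : Fin S, f θ (ts j)) ∂(Measure.pi fun _ : Fin S => ν) := by
        rw [lintegral_const_mul _ (Finset.measurable_sum _ fun s _ => mterm s),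
          lintegral_finset_sum _ fun s _ => mterm s]
    _ = (S : ℝ≥0∞)⁻¹ * (S * ∫⁻ t, K (t_y - t) * f θ t ∂ν) := by
        simp_rw [key]
        rw [Finset.sum_const, Finset.card_univ, Fintype.card_fin, nsmul_eq_mul]
    _ = ∫⁻ t, K (t_y - t) * f θ t ∂ν := by
        rw [← mul_assoc, ENNReal.inv_mul_cancel (by simp; omega) (by simp), one_mul]

/-- The normalizing constants of the joint and marginal ABC posteriors
coincide:
`∫_E ∫_{𝒯^S} [S⁻¹ ∑_s K_h(t_y − t^s)] [∏_s f(t^s|θ)] π(θ) dt^{1:S} dθ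
   = ∫_E ∫_𝒯 K_h(t_y − t) f(t|θ) π(θ) dt dθ`,
and consequently the normalized joint posterior `π_J(θ, t^{1:S}|t_y)` integrates
over `𝒯^S` exactly to the normalized marginal posterior `π_M(θ|t_y)`. -/
theorem abc_joint_and_marginal_normalizing_constants
    {E 𝒯 : Type*} [MeasurableSpace E] [MeasurableSpace 𝒯]
    [AddGroup 𝒯] [MeasurableSub₂ 𝒯]
    (μ : Measure E) (ν : Measure 𝒯) [SigmaFinite μ] [SigmaFinite ν]
    (π : E → ℝ≥0∞) (f : E → 𝒯 → ℝ≥0∞) (K : 𝒯 → ℝ≥0∞)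
    (hπ : Measurable π) (hπprob : ∫⁻ θ, π θ ∂μ = 1)
    (hf : Measurable (Function.uncurry f))
    (hfprob : ∀ θ, ∫⁻ t, f θ t ∂ν = 1)
    (hK : Measurable K)
    (t_y : 𝒯) (S : ℕ) (hS : 1 ≤ S)
    (hfin : (∫⁻ θ, ∫⁻ t, K (t_y - t) * f θ t * π θ ∂ν ∂μ) ≠ ⊤)
    (hpos : 0 < ∫⁻ θ, ∫⁻ t, K (t_y - t) * f θ t * π θ ∂ν ∂μ) :
    (∫⁻ θ, ∫⁻ ts : Fin S → 𝒯,
        ((S : ℝ≥0∞)⁻¹ * ∑ s : Fin S, K (t_y - ts s)) * (∏ s : Fin S, f θ (ts s)) * π θ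
        ∂(Measure.pi fun _ : Fin S => ν) ∂μ) =
      (∫⁻ θ, ∫⁻ t, K (t_y - t) * f θ t * π θ ∂ν ∂μ) ∧
    ∀ θ : E,
      (∫⁻ ts : Fin S → 𝒯,
          (((S : ℝ≥0∞)⁻¹ * ∑ s : Fin S, K (t_y - ts s)) * (∏ s : Fin S, f θ (ts s)) *
              π θ) /
            (∫⁻ θ', ∫⁻ t, K (t_y - t) * f θ' t * π θ' ∂ν ∂μ)
          ∂(Measure.pi fun _ : Fin S => ν)) =
        (π θ * ∫⁻ t, K (t_y - t) * f θ t ∂ν) /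
          (∫⁻ θ', ∫⁻ t, K (t_y - t) * f θ' t * π θ' ∂ν ∂μ) := by
  have mK : Measurable fun t : 𝒯 => K (t_y - t) :=
    hK.comp (measurable_const.sub measurable_id)
  have mf : ∀ θ, Measurable (f θ) := fun θ => hf.comp measurable_prodMk_left
  have mbig : ∀ θ : E, Measurable fun ts : Fin S → 𝒯 =>
      ((S : ℝ≥0∞)⁻¹ * ∑ s : Fin S, K (t_y - ts s)) * (∏ s : Fin S, f θ (ts s)) :=
    fun θ => (measurable_const.mul (Finset.measurable_sum _ fun (s : Fin S) _ =>
        mK.comp (measurable_pi_apply s))).mul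
      (Finset.measurable_prod _ fun (s : Fin S) _ => (mf θ).comp (measurable_pi_apply s))
  have inner : ∀ θ : E, ∫⁻ ts : Fin S → 𝒯,
      ((S : ℝ≥0∞)⁻¹ * ∑ s : Fin S, K (t_y - ts s)) * (∏ s : Fin S, f θ (ts s)) * π θ
      ∂(Measure.pi fun _ : Fin S => ν) = (∫⁻ t, K (t_y - t) * f θ t ∂ν) * π θ := by
    intro θ
    rw [lintegral_mul_const _ (mbig θ),
      abc_core ν π f K hf hfprob hK t_y S hS θ]
  constructor
  · refine lintegral_congr fun θ => ?_
    rw [inner θ, lintegral_mul_const _ (by exact mK.mul (mf θ) : Measurable fun t => K (t_y - t) * f θ t)]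
  · intro θ
    set c := ∫⁻ θ', ∫⁻ t, K (t_y - t) * f θ' t * π θ' ∂ν ∂μ
    simp_rw [div_eq_mul_inv]
    rw [lintegral_mul_const _ ((mbig θ).mul_const _), inner θ, mul_comm (∫⁻ t, K (t_y - t) * f θ t ∂ν) (π θ)]
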